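/- A rim-hook h is a factor of a reverse plane partition π (i.e., π = h * π̃ for some reverse plane partition π̃) if and only if h = h(π, u) for some candidate u ∈ C(π) such that the path Q(π, u) is (π − Q(π,u))-compatible and π − Q(π, u) is a reverse plane partition. -/

import Mathlib

abbrev Cell := ℕ × ℕ

def nC (u : Cell) : Cell := (u.1 - 1, u.2)
def eC (u : Cell) : Cell := (u.1, u.2 + 1)
def sC (u : Cell) : Cell := (u.1 + 1, u.2)
def wC (u : Cell) : Cell := (u.1, u.2 - 1)
def seC (u : Cell) : Cell := (u.1 + 1, u.2 + 1)

/-- `lam i` is the `i`-th part (1-indexed); weakly decreasing with finitely many nonzero parts. -/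
def IsPartition (lam : ℕ → ℕ) : Prop :=
  (∀ i, lam (i + 1) ≤ lam i) ∧ (∃ N, ∀ i, N ≤ i → lam i = 0)

/-- The Young diagram of `lam`: cells `(i,j)` with `1 ≤ i`, `1 ≤ j ≤ lam i`. -/
def cells (lam : ℕ → ℕ) : Set Cell := {u | 1 ≤ u.1 ∧ 1 ≤ u.2 ∧ u.2 ≤ lam u.1}

/-- The conjugate partition. -/
noncomputable def conj (lam : ℕ → ℕ) (j : ℕ) : ℕ := {i | 1 ≤ i ∧ j ≤ lam i}.ncard

def content (u : Cell) : ℤ := (u.2 : ℤ) - (u.1 : ℤ)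

/-- Hook length of the cell `u = (i,j)`: `lam i + lam' j - i - j + 1`. -/
noncomputable def hookLen (lam : ℕ → ℕ) (u : Cell) : ℕ := lam u.1 + conj lam u.2 - u.1 - u.2 + 1

/-- A North-East path in `lam`. -/
def IsNEPath (lam : ℕ → ℕ) (P : List Cell) : Prop :=
  P ≠ [] ∧ (∀ u ∈ P, u ∈ cells lam) ∧ List.Chain' (fun u v => v = nC u ∨ v = eC u) P

/-- Head of a path. -/
def hd (P : List Cell) : Cell := P.headD (0, 0)
/-- Tail (last cell) of a path. -/
def lst (P : List Cell) : Cell := P.getLastD (0, 0)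
/-- Length of a path (number of steps). -/
def len (P : List Cell) : ℕ := P.length - 1

/-- A rim-hook of `lam`. -/
def IsRimHook (lam : ℕ → ℕ) (h : List Cell) : Prop :=
  IsNEPath lam h ∧ sC (hd h) ∉ cells lam ∧ eC (lst h) ∉ cells lam ∧
    ∀ u ∈ h, seC u ∉ cells lam

def IsOuterCorner (lam : ℕ → ℕ) (u : Cell) : Prop :=
  u ∈ cells lam ∧ eC u ∉ cells lam ∧ sC u ∉ cells lam

def IsInnerCorner (lam : ℕ → ℕ) (u : Cell) : Prop :=
  u ∈ cells lam ∧ eC u ∈ cells lam ∧ sC u ∈ cells lam ∧ seC u ∉ cells lam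

def IsCornerContent (lam : ℕ → ℕ) (z : ℤ) : Prop :=
  ∃ v, (IsInnerCorner lam v ∨ IsOuterCorner lam v) ∧ content v = z

/-- Cells whose content is the content of an inner corner. -/
def regionI (lam : ℕ → ℕ) : Set Cell :=
  {u ∈ cells lam | ∃ v, IsInnerCorner lam v ∧ content v = content u}

/-- Cells whose content is the content of an outer corner. -/
def regionO (lam : ℕ → ℕ) : Set Cell :=
  {u ∈ cells lam | ∃ v, IsOuterCorner lam v ∧ content v = content u}

/-- Cells with `c(u) < o_1` or `i_k < c(u) < o_{k+1}`: the content is not a corner content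
and the largest corner content below it (if any) is an inner-corner content. -/
def regionA (lam : ℕ → ℕ) : Set Cell :=
  {u ∈ cells lam | ¬ IsCornerContent lam (content u) ∧
    ∀ w, IsOuterCorner lam w → content w < content u →
      ∃ v, IsInnerCorner lam v ∧ content w < content v ∧ content v < content u}

/-- Cells with `o_k < c(u) < i_k` or `o_{r+1} < c(u)`: the remaining cells. -/
def regionB (lam : ℕ → ℕ) : Set Cell :=
  cells lam \ (regionI lam ∪ regionO lam ∪ regionA lam)

/-- A reverse plane partition of shape `lam`, as a function vanishing outside `lam`
which is weakly increasing along rows and columns. -/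
def IsRPP (lam : ℕ → ℕ) (π : Cell → ℕ) : Prop :=
  (∀ u, u ∉ cells lam → π u = 0) ∧
  (∀ u ∈ cells lam, eC u ∈ cells lam → π u ≤ π (eC u)) ∧
  (∀ u ∈ cells lam, sC u ∈ cells lam → π u ≤ π (sC u))

/-- `π + P`: increase by one along the path. -/
def addPath (π : Cell → ℕ) (P : List Cell) : Cell → ℕ :=
  fun u => if u ∈ P then π u + 1 else π u

/-- `π - P`: decrease by one along the path. -/
def subPath (π : Cell → ℕ) (P : List Cell) : Cell → ℕ :=
  fun u => if u ∈ P then π u - 1 else π u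

/-- The path `P` is `π`-compatible. -/
def Compatible (lam : ℕ → ℕ) (π : Cell → ℕ) (P : List Cell) : Prop :=
  (∀ u ∈ P, u ∈ regionI lam ∪ regionA lam → eC u ∈ P ∧ π (eC u) = π u) ∧
  (∀ u ∈ P, nC u ∈ P → π (nC u) = π u)

/-- `P` witnesses the insertion of the rim-hook `h` into `π`. -/
def InsertPath (lam : ℕ → ℕ) (π : Cell → ℕ) (h P : List Cell) : Prop :=
  IsNEPath lam P ∧ Compatible lam π P ∧ lst P = lst h ∧ len P = len h ∧
    IsRPP lam (addPath π P)

/-- The rim-hook `h` inserts into `π`. -/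
def Inserts (lam : ℕ → ℕ) (h : List Cell) (π : Cell → ℕ) : Prop :=
  ∃ P, InsertPath lam π h P

open Classical in
/-- `h * π`, the insertion of `h` into `π` (equal to `π` if `h` does not insert). -/
noncomputable def insertRH (lam : ℕ → ℕ) (h : List Cell) (π : Cell → ℕ) : Cell → ℕ :=
  if hP : Inserts lam h π then addPath π hP.choose else π

/-- `h₁ * h₂ * ⋯ * h_s * 0`. -/
noncomputable def insertList (lam : ℕ → ℕ) (hs : List (List Cell)) : Cell → ℕ :=
  hs.foldr (insertRH lam) (fun _ => 0)

/-- Reverse lexicographic order on rim-hooks. -/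
def RHle (f h : List Cell) : Prop :=
  content (hd h) < content (hd f) ∨
    (content (hd f) = content (hd h) ∧ content (lst f) ≤ content (lst h))

/-- Reverse lexicographic order on cells. -/
def revlexLE (u v : Cell) : Prop := v.2 < u.2 ∨ (u.2 = v.2 ∧ v.1 ≤ u.1)

/-- Content order on cells: `u ⊴ v`. -/
def contentLE (u v : Cell) : Prop :=
  content v < content u ∨ (content u = content v ∧ v.1 ≤ u.1)

/-- The set of candidates of `π`. -/
def candidates (lam : ℕ → ℕ) (π : Cell → ℕ) : Set Cell :=
  {u ∈ regionO lam | π (wC u) < π u} ∪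
    {u ∈ regionA lam | π (wC u) < π u ∧ π (nC u) < π u}

/-- One step of the path `Q(π,u)`. -/
def QStep (lam : ℕ → ℕ) (π : Cell → ℕ) (v v' : Cell) : Prop :=
  (v ∈ regionO lam ∪ regionB lam ∧ π (nC v) = π v ∧ v' = nC v) ∨
  ((v ∈ regionI lam ∪ regionA lam ∨ (π (nC v) < π v ∧ eC v ∈ cells lam)) ∧ v' = eC v)

/-- `P` is the path `Q(π,u)`: starts at `u`, follows the `Q`-steps, and terminates
when `π(n v) < π(v)` and `e v ∉ lam`. -/
def IsQPath (lam : ℕ → ℕ) (π : Cell → ℕ) (u : Cell) (P : List Cell) : Prop :=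
  P ≠ [] ∧ (∀ v ∈ P, v ∈ cells lam) ∧ hd P = u ∧ List.Chain' (QStep lam π) P ∧
    π (nC (lst P)) < π (lst P) ∧ eC (lst P) ∉ cells lam

/-! ### Auxiliary lemmas -/

lemma lam_anti {lam : ℕ → ℕ} (hlam : IsPartition lam) : Antitone lam :=
  antitone_nat_of_succ_le hlam.1

lemma hd_eq_getElem (P : List Cell) (h : P ≠ []) :
    hd P = P[0]'(List.length_pos_iff.mpr h) := by
  cases P with
  | nil => exact absurd rfl h
  | cons a t => rfl

lemma lst_eq_getElem (P : List Cell) (h : P ≠ []) :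
    lst P = P[P.length - 1]'(Nat.sub_lt (List.length_pos_iff.mpr h) one_pos) := by
  unfold lst
  rw [List.getLastD_eq_getLast?, List.getLast?_eq_getLast h, Option.getD_some,
    List.getLast_eq_getElem]

/-- RPP values weakly increase going south (0 outside the diagram). -/
lemma rpp_n_le {lam : ℕ → ℕ} (hlam : IsPartition lam) {πt : Cell → ℕ}
    (hRPP : IsRPP lam πt) (v : Cell) (hv : v ∈ cells lam) : πt (nC v) ≤ πt v := by
  obtain ⟨a, b⟩ := v
  obtain ⟨h1, h2, h3⟩ := hv
  simp only [Prod.fst, Prod.snd] at h1 h2 h3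
  by_cases hv1 : a = 1
  · have hnot : nC (a, b) ∉ cells lam := by
      intro hc
      have := hc.1
      simp [nC, hv1] at this
    rw [hRPP.1 _ hnot]
    exact Nat.zero_le _
  · have hmem : nC (a, b) ∈ cells lam := by
      refine ⟨by simp [nC]; omega, h2, ?_⟩
      exact le_trans h3 (lam_anti hlam (show a - 1 ≤ a by omega))
    have hsc : sC (nC (a, b)) = (a, b) := by
      simp [sC, nC]
      omega
    have := hRPP.2.2 (nC (a, b)) hmem (by rw [hsc]; exact ⟨h1, h2, h3⟩)
    rwa [hsc] at this

lemma rpp_w_le {lam : ℕ → ℕ} {πt : Cell → ℕ}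
    (hRPP : IsRPP lam πt) (v : Cell) (hv : v ∈ cells lam) : πt (wC v) ≤ πt v := by
  obtain ⟨a, b⟩ := v
  obtain ⟨h1, h2, h3⟩ := hv
  simp only [Prod.fst, Prod.snd] at h1 h2 h3
  by_cases hv2 : b = 1
  · have hnot : wC (a, b) ∉ cells lam := by
      intro hc
      have := hc.2.1
      simp [wC, hv2] at this
    rw [hRPP.1 _ hnot]
    exact Nat.zero_le _
  · have hmem : wC (a, b) ∈ cells lam := by
      refine ⟨h1, by simp [wC]; omega, ?_⟩
      simp [wC]
      omega
    have hec : eC (wC (a, b)) = (a, b) := by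
      simp [eC, wC]
      omega
    have := hRPP.2.1 (wC (a, b)) hmem (by rw [hec]; exact ⟨h1, h2, h3⟩)
    rwa [hec] at this

/-- Coordinate monotonicity along a NE chain. -/
lemma ne_mono {lam : ℕ → ℕ} (P : List Cell)
    (hch : List.Chain' (fun u v => v = nC u ∨ v = eC u) P)
    (hcell : ∀ v ∈ P, v ∈ cells lam) :
    ∀ i j (hij : i ≤ j) (hj : j < P.length),
      (P[j]'hj).1 ≤ (P[i]'(lt_of_le_of_lt hij hj)).1 ∧
      (P[i]'(lt_of_le_of_lt hij hj)).2 ≤ (P[j]'hj).2 ∧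
      (P[i]'(lt_of_le_of_lt hij hj)).1 + (P[j]'hj).2 + i
        = (P[j]'hj).1 + (P[i]'(lt_of_le_of_lt hij hj)).2 + j := by
  intro i j hij hj
  induction j, hij using Nat.le_induction with
  | base => omega
  | succ j hij ih =>
    have hj' : j < P.length := by omega
    have ihs := ih hj'
    have hstep := List.isChain_iff_getElem.mp hch j (by omega)
    have hrow : 1 ≤ (P[j]'hj').1 := (hcell _ (List.getElem_mem hj')).1
    rcases hstep with hs | hs
    · have e1 : (P[j+1]'hj).1 = (P[j]'hj').1 - 1 := by rw [hs]; rfl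
      have e2 : (P[j+1]'hj).2 = (P[j]'hj').2 := by rw [hs]; rfl
      omega
    · have e1 : (P[j+1]'hj).1 = (P[j]'hj').1 := by rw [hs]; rfl
      have e2 : (P[j+1]'hj).2 = (P[j]'hj').2 + 1 := by rw [hs]; rfl
      omega

/-- Along a Q-path, the values of `π` weakly increase. -/
lemma q_head_le {lam : ℕ → ℕ} {π : Cell → ℕ} (hπ : IsRPP lam π) :
    ∀ Q : List Cell, List.Chain' (QStep lam π) Q → (∀ v ∈ Q, v ∈ cells lam) →
      ∀ v ∈ Q, π (hd Q) ≤ π v := by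
  intro Q
  induction Q with
  | nil => simp
  | cons a t ih =>
    intro hch hc v hv
    cases t with
    | nil =>
      simp at hv
      subst hv
      exact le_refl _
    | cons b t' =>
      rcases List.mem_cons.mp hv with rfl | hv'
      · exact le_refl _
      · have hab : QStep lam π a b := (List.isChain_cons_cons.mp hch).1
        have hone : π a ≤ π b := by
          rcases hab with ⟨_, heq, hb⟩ | ⟨_, hb⟩
          · subst hb; omega
          · subst hb
            exact hπ.2.1 a (hc a (by simp)) (hc _ (by simp))
        calc π (hd (a :: b :: t')) = π a := rfl
          _ ≤ π b := hone
          _ ≤ π v := ih (List.isChain_cons_cons.mp hch).2 (fun w hw => hc w (by simp [hw])) v hv'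
/-! ### Corner combinatorics -/

lemma inner_corner_shape {lam : ℕ → ℕ} {v : Cell} (hv : IsInnerCorner lam v) :
    1 ≤ v.1 ∧ 1 ≤ v.2 ∧ v.2 + 1 ≤ lam v.1 ∧ v.2 = lam (v.1 + 1) := by
  obtain ⟨⟨h1, h2, _⟩, he, hs, hse⟩ := hv
  have he' : v.2 + 1 ≤ lam v.1 := he.2.2
  have hs' : v.2 ≤ lam (v.1 + 1) := hs.2.2
  have hse' : ¬ (1 ≤ v.1 + 1 ∧ 1 ≤ v.2 + 1 ∧ v.2 + 1 ≤ lam (v.1 + 1)) := hse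
  exact ⟨h1, h2, he', by omega⟩

lemma outer_corner_shape {lam : ℕ → ℕ} {w : Cell} (hw : IsOuterCorner lam w) :
    1 ≤ w.1 ∧ 1 ≤ w.2 ∧ w.2 = lam w.1 ∧ lam (w.1 + 1) < lam w.1 := by
  obtain ⟨⟨h1, h2, h3⟩, he, hs⟩ := hw
  have he' : ¬ (1 ≤ w.1 ∧ 1 ≤ w.2 + 1 ∧ w.2 + 1 ≤ lam w.1) := he
  have hs' : ¬ (1 ≤ w.1 + 1 ∧ 1 ≤ w.2 ∧ w.2 ≤ lam (w.1 + 1)) := hs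
  have : w.2 = lam w.1 := by omega
  exact ⟨h1, h2, this, by omega⟩

/-- Between two outer corners there is an inner corner (in content). -/
lemma interleave {lam : ℕ → ℕ} (hlam : IsPartition lam) {w1 w2 : Cell}
    (h1 : IsOuterCorner lam w1) (h2 : IsOuterCorner lam w2)
    (hlt : content w1 < content w2) :
    ∃ v, IsInnerCorner lam v ∧ content w1 < content v ∧ content v < content w2 := by
  obtain ⟨ha1, hb1, heq1, hdrop1⟩ := outer_corner_shape h1
  obtain ⟨ha2, hb2, heq2, hdrop2⟩ := outer_corner_shape h2
  have hcon1 : content w1 = (lam w1.1 : ℤ) - w1.1 := by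
    unfold content; rw [heq1]
  have hcon2 : content w2 = (lam w2.1 : ℤ) - w2.1 := by
    unfold content; rw [heq2]
  rw [hcon1, hcon2] at hlt
  have ha21 : w2.1 < w1.1 := by
    by_contra hcc
    have : lam w2.1 ≤ lam w1.1 := lam_anti hlam (by omega)
    omega
  have hlam12 : lam w1.1 < lam w2.1 := by
    have hle : lam w1.1 ≤ lam (w2.1 + 1) := lam_anti hlam (by omega)
    omega
  have key : ∃ a, w2.1 ≤ a ∧ a < w1.1 ∧ lam (a + 1) = lam w1.1 ∧ lam w1.1 < lam a := by
    have hmle : w2.1 ≤ Nat.findGreatest (fun a' => lam w1.1 < lam a') w1.1 :=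
      Nat.le_findGreatest (by omega) hlam12
    have hgle : Nat.findGreatest (fun a' => lam w1.1 < lam a') w1.1 ≤ w1.1 :=
      Nat.findGreatest_le (P := fun a' => lam w1.1 < lam a') w1.1
    have hspec : lam w1.1 < lam (Nat.findGreatest (fun a' => lam w1.1 < lam a') w1.1) :=
      Nat.findGreatest_spec (P := fun a' => lam w1.1 < lam a') (m := w2.1) (by omega) hlam12
    have hne : Nat.findGreatest (fun a' => lam w1.1 < lam a') w1.1 ≠ w1.1 := by
      intro hc
      rw [hc] at hspec
      omega
    have hnot : ¬ (lam w1.1 < lam (Nat.findGreatest (fun a' => lam w1.1 < lam a') w1.1 + 1)) :=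
      Nat.findGreatest_is_greatest (P := fun a' => lam w1.1 < lam a') (n := w1.1) (by omega) (by omega)
    have hle2 : lam w1.1 ≤ lam (Nat.findGreatest (fun a' => lam w1.1 < lam a') w1.1 + 1) :=
      lam_anti hlam (by omega)
    exact ⟨Nat.findGreatest (fun a' => lam w1.1 < lam a') w1.1, hmle, by omega, by omega, hspec⟩
  obtain ⟨a, haa2, haa1, hval, haP⟩ := key
  have hpos : 1 ≤ lam (a + 1) := by omega
  refine ⟨(a, lam (a + 1)),
    ⟨⟨(show 1 ≤ a by omega), (show 1 ≤ lam (a+1) by omega), (show lam (a+1) ≤ lam a by omega)⟩,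
     ⟨(show 1 ≤ a by omega), (show 1 ≤ lam (a+1) + 1 by omega), (show lam (a+1) + 1 ≤ lam a by omega)⟩,
     ⟨(show 1 ≤ a + 1 by omega), (show 1 ≤ lam (a+1) by omega), (show lam (a+1) ≤ lam (a+1) by omega)⟩,
     ?_⟩, ?_, ?_⟩
  · intro hc
    have h3 : lam (a+1) + 1 ≤ lam (a+1) := hc.2.2
    omega
  · rw [hcon1]
    have hcv : content (a, lam (a+1)) = (lam (a+1) : ℤ) - (a : ℤ) := rfl
    rw [hcv]
    omega
  · rw [hcon2]
    have hcv : content (a, lam (a+1)) = (lam (a+1) : ℤ) - (a : ℤ) := rfl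
    rw [hcv]
    omega
/-- A cell at the bottom of its column lies in region O or A. -/
lemma bottom_mem_OA {lam : ℕ → ℕ} (hlam : IsPartition lam) {u : Cell}
    (hu : u ∈ cells lam) (hs : sC u ∉ cells lam) :
    u ∈ regionO lam ∪ regionA lam := by
  obtain ⟨i, j⟩ := u
  have h1 : 1 ≤ i := hu.1
  have h2 : 1 ≤ j := hu.2.1
  have h3 : j ≤ lam i := hu.2.2
  have hdrop : lam (i + 1) < j := by
    by_contra hcc
    exact hs ⟨(show 1 ≤ i + 1 by omega), (show 1 ≤ j by omega), (show j ≤ lam (i+1) by omega)⟩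
  have houter : IsOuterCorner lam (i, lam i) := by
    refine ⟨⟨(show 1 ≤ i from h1), (show 1 ≤ lam i by omega), (show lam i ≤ lam i from le_refl _)⟩,
      fun hc => ?_, fun hc => ?_⟩
    · have : lam i + 1 ≤ lam i := hc.2.2
      omega
    · have : lam i ≤ lam (i + 1) := hc.2.2
      omega
  have hNI : ∀ v, IsInnerCorner lam v →
      ¬ ((j : ℤ) - i ≤ content v ∧ content v ≤ (lam i : ℤ) - i) := by
    rintro v hv ⟨hl, hr⟩
    obtain ⟨hv1, hv2, hve, hveq⟩ := inner_corner_shape hv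
    have hcv : content v = (v.2 : ℤ) - v.1 := rfl
    rcases lt_or_ge v.1 i with hc | hc
    · have : lam i ≤ lam (v.1 + 1) := lam_anti hlam (by omega)
      omega
    · have : lam (v.1 + 1) ≤ lam (i + 1) := lam_anti hlam (by omega)
      omega
  have hNO : ∀ w, IsOuterCorner lam w →
      ¬ ((j : ℤ) - i ≤ content w ∧ content w < (lam i : ℤ) - i) := by
    rintro w hw ⟨hl, hr⟩
    obtain ⟨hw1, hw2, hweq, hwdrop⟩ := outer_corner_shape hw
    have hcw : content w = (w.2 : ℤ) - w.1 := rfl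
    rcases lt_or_ge w.1 (i + 1) with hc | hc
    · have : lam i ≤ lam w.1 := lam_anti hlam (by omega)
      omega
    · have : lam w.1 ≤ lam (i + 1) := lam_anti hlam (by omega)
      omega
  have hcu : content (i, j) = (j : ℤ) - i := rfl
  have hcoi : content (i, lam i) = (lam i : ℤ) - i := rfl
  by_cases hcase : j = lam i
  · left
    exact ⟨hu, (i, lam i), houter, by rw [hcoi, hcu, hcase]⟩
  · have hjlt : j < lam i := by omega
    right
    refine ⟨hu, ?_, ?_⟩
    · rintro ⟨v, hv | hv, hcv⟩
      · exact hNI v hv ⟨by rw [hcv, hcu], by rw [hcv, hcu]; omega⟩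
      · exact hNO v hv ⟨by rw [hcv, hcu], by rw [hcv, hcu]; omega⟩
    · intro w hw hlt
      have hlt2 : content w < content (i, lam i) := by
        rw [hcoi]
        rw [hcu] at hlt
        omega
      obtain ⟨v, hvI, hv1, hv2⟩ := interleave hlam hw houter hlt2
      refine ⟨v, hvI, hv1, ?_⟩
      by_contra hge
      exact hNI v hvI ⟨by omega, by omega⟩

lemma regionO_of_content {lam : ℕ → ℕ} {u v : Cell} (hu : u ∈ cells lam)
    (hv : v ∈ regionO lam) (hc : content u = content v) : u ∈ regionO lam := by
  obtain ⟨_, w, hw, hcw⟩ := hv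
  exact ⟨hu, w, hw, hcw.trans hc.symm⟩

lemma regionA_of_content {lam : ℕ → ℕ} {u v : Cell} (hu : u ∈ cells lam)
    (hv : v ∈ regionA lam) (hc : content u = content v) : u ∈ regionA lam := by
  refine ⟨hu, by rw [hc]; exact hv.2.1, fun w hw hlt => ?_⟩
  obtain ⟨x, hx1, hx2, hx3⟩ := hv.2.2 w hw (by rw [← hc]; exact hlt)
  exact ⟨x, hx1, hx2, by rw [hc]; exact hx3⟩

lemma regionA_not_O {lam : ℕ → ℕ} {u : Cell} (hA : u ∈ regionA lam)
    (hO : u ∈ regionO lam) : False := by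
  obtain ⟨_, w, hw, hcw⟩ := hO
  exact hA.2.1 ⟨w, Or.inr hw, hcw⟩
/-- A rim-hook `h` is a factor of `π` iff `h = h(π,u)` for some candidate `u ∈ C(π)`
such that `Q(π,u)` is `(π - Q(π,u))`-compatible and `π - Q(π,u)` is a reverse plane
partition. -/
theorem factor_iff_candidate (lam : ℕ → ℕ) (hlam : IsPartition lam)
    (π : Cell → ℕ) (hπ : IsRPP lam π) (h : List Cell) (hh : IsRimHook lam h) :
    (∃ πt : Cell → ℕ, IsRPP lam πt ∧ ∃ P, InsertPath lam πt h P ∧ addPath πt P = π) ↔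
    (∃ u ∈ candidates lam π, ∃ Q, IsQPath lam π u Q ∧ lst h = lst Q ∧ len h = len Q ∧
      Compatible lam (subPath π Q) Q ∧ IsRPP lam (subPath π Q)) := by
  obtain ⟨⟨hhne, hhcell, hhchain⟩, hsdh, hedh, hseh⟩ := hh
  have hhlen : 0 < h.length := List.length_pos_iff.mpr hhne
  have monoh := ne_mono (lam := lam) h hhchain hhcell
  have hdgh : hd h = h[0]'hhlen := hd_eq_getElem h hhne
  have hlgh : lst h = h[h.length - 1]'(Nat.sub_lt hhlen one_pos) := lst_eq_getElem h hhne
  constructor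
  · rintro ⟨πt, hπt, P, ⟨⟨hPne, hPcell, hPchain⟩, hcompP, hlstP, hlenP, hRPPadd⟩, hadd⟩
    subst hadd
    have hPlen : 0 < P.length := List.length_pos_iff.mpr hPne
    have mono := ne_mono (lam := lam) P hPchain hPcell
    have hcg : ∀ i (hi : i < P.length), P[i]'hi ∈ cells lam := fun i hi =>
      hPcell _ (List.getElem_mem hi)
    have hdg : hd P = P[0]'hPlen := hd_eq_getElem P hPne
    have hlg : lst P = P[P.length - 1]'(Nat.sub_lt hPlen one_pos) := lst_eq_getElem P hPne
    have hdmem : hd P ∈ P := by rw [hdg]; exact List.getElem_mem _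
    have hlstmem : lst P ∈ P := by rw [hlg]; exact List.getElem_mem _
    have hlen_eq : P.length = h.length := by unfold len at hlenP; omega
    -- the Q-step chain
    have hQchain : List.Chain' (QStep lam (addPath πt P)) P := by
      refine List.isChain_iff_getElem.mpr ?_
      intro i hilt
      have hi : i < P.length := by omega
      have hi1 : i + 1 < P.length := by omega
      have hstep := List.isChain_iff_getElem.mp hPchain i hilt
      have hvmem : P[i]'hi ∈ P := List.getElem_mem hi
      rcases hstep with hn | he
      · -- north step
        have heCnot : eC (P[i]'hi) ∉ P := by
          intro hmem
          obtain ⟨k, hk, hkeq⟩ := List.mem_iff_getElem.mp hmem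
          have hc1 : (P[k]'hk).1 = (P[i]'hi).1 := by rw [hkeq]; rfl
          have hc2 : (P[k]'hk).2 = (P[i]'hi).2 + 1 := by rw [hkeq]; rfl
          rcases le_or_gt k i with hki | hik
          · obtain ⟨q1, q2, q3⟩ := mono k i hki hi
            omega
          · obtain ⟨q1, q2, q3⟩ := mono (i + 1) k hik hk
            have e1 : (P[i + 1]'hi1).1 = (P[i]'hi).1 - 1 := by rw [hn]; rfl
            have hr := (hcg i hi).1
            omega
        have hOB : P[i]'hi ∈ regionO lam ∪ regionB lam := by
          by_cases hO : P[i]'hi ∈ regionO lam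
          · exact Or.inl hO
          · right
            refine ⟨hcg i hi, fun hmem => ?_⟩
            rcases (Set.mem_union _ _ _).mp hmem with h12 | hA
            · rcases (Set.mem_union _ _ _).mp h12 with hI | hO2
              · exact heCnot (hcompP.1 _ hvmem (Or.inl hI)).1
              · exact hO hO2
            · exact heCnot (hcompP.1 _ hvmem (Or.inr hA)).1
        have hnmem : nC (P[i]'hi) ∈ P := by
          rw [← hn]; exact List.getElem_mem hi1
        have hπeq := hcompP.2 _ hvmem hnmem
        exact Or.inl ⟨hOB, by simp [addPath, hnmem, hvmem, hπeq], hn⟩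
      · -- east step
        by_cases hIA : P[i]'hi ∈ regionI lam ∪ regionA lam
        · exact Or.inr ⟨Or.inl hIA, he⟩
        · have hnnot : nC (P[i]'hi) ∉ P := by
            intro hmem
            obtain ⟨k, hk, hkeq⟩ := List.mem_iff_getElem.mp hmem
            have hc1 : (P[k]'hk).1 = (P[i]'hi).1 - 1 := by rw [hkeq]; rfl
            have hc2 : (P[k]'hk).2 = (P[i]'hi).2 := by rw [hkeq]; rfl
            have hr := (hcg i hi).1
            rcases le_or_gt k i with hki | hik
            · obtain ⟨q1, q2, q3⟩ := mono k i hki hi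
              omega
            · obtain ⟨q1, q2, q3⟩ := mono (i + 1) k hik hk
              have e2 : (P[i + 1]'hi1).2 = (P[i]'hi).2 + 1 := by rw [he]; rfl
              omega
          refine Or.inr ⟨Or.inr ⟨?_, by rw [← he]; exact hcg (i + 1) hi1⟩, he⟩
          have hle := rpp_n_le hlam hπt _ (hcg i hi)
          simp only [addPath, if_neg hnnot, if_pos hvmem]
          omega
    -- terminal conditions
    have hnlnot : nC (lst P) ∉ P := by
      intro hmem
      obtain ⟨k, hk, hkeq⟩ := List.mem_iff_getElem.mp hmem
      obtain ⟨q1, q2, q3⟩ := mono k (P.length - 1) (by omega) (by omega)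
      have hc1 : (P[k]'hk).1 = (lst P).1 - 1 := by rw [hkeq]; rfl
      have hr : 1 ≤ (lst P).1 := (hPcell _ hlstmem).1
      rw [hlg] at hc1 hr
      omega
    have hterm1 : addPath πt P (nC (lst P)) < addPath πt P (lst P) := by
      have hle := rpp_n_le hlam hπt _ (hPcell _ hlstmem)
      simp only [addPath, if_neg hnlnot, if_pos hlstmem]
      omega
    have hterm2 : eC (lst P) ∉ cells lam := by rw [hlstP]; exact hedh
    -- candidate
    have hwnot : wC (hd P) ∉ P := by
      intro hmem
      obtain ⟨k, hk, hkeq⟩ := List.mem_iff_getElem.mp hmem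
      obtain ⟨q1, q2, q3⟩ := mono 0 k (Nat.zero_le _) hk
      have hc2 : (P[k]'hk).2 = (hd P).2 - 1 := by rw [hkeq]; rfl
      have hcl : 1 ≤ (hd P).2 := (hPcell _ hdmem).2.1
      rw [hdg] at hc2 hcl
      omega
    have hwlt : addPath πt P (wC (hd P)) < addPath πt P (hd P) := by
      have hle := rpp_w_le hπt _ (hPcell _ hdmem)
      simp only [addPath, if_neg hwnot, if_pos hdmem]
      omega
    have hlast_eq : P[P.length - 1]'(Nat.sub_lt hPlen one_pos)
        = h[h.length - 1]'(Nat.sub_lt hhlen one_pos) := by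
      rw [hlg, hlgh] at hlstP
      exact hlstP
    have hcontent : content (hd P) = content (hd h) := by
      rw [hdg, hdgh]
      obtain ⟨m1, m2, m3⟩ := mono 0 (P.length - 1) (Nat.zero_le _) (Nat.sub_lt hPlen one_pos)
      obtain ⟨n1, n2, n3⟩ := monoh 0 (h.length - 1) (Nat.zero_le _) (Nat.sub_lt hhlen one_pos)
      have e1 : (P[P.length - 1]'(Nat.sub_lt hPlen one_pos)).1
          = (h[h.length - 1]'(Nat.sub_lt hhlen one_pos)).1 := by rw [hlast_eq]
      have e2 : (P[P.length - 1]'(Nat.sub_lt hPlen one_pos)).2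
          = (h[h.length - 1]'(Nat.sub_lt hhlen one_pos)).2 := by rw [hlast_eq]
      unfold content
      omega
    have hhd_mem_h : hd h ∈ h := by rw [hdgh]; exact List.getElem_mem _
    have hOA := bottom_mem_OA hlam (hhcell _ hhd_mem_h) hsdh
    have hnAnot : hd P ∈ regionA lam → nC (hd P) ∉ P := by
      intro hA hmem
      obtain ⟨k, hk, hkeq⟩ := List.mem_iff_getElem.mp hmem
      obtain ⟨q1, q2, q3⟩ := mono 0 k (Nat.zero_le _) hk
      have hc1 : (P[k]'hk).1 = (hd P).1 - 1 := by rw [hkeq]; rfl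
      have hc2 : (P[k]'hk).2 = (hd P).2 := by rw [hkeq]; rfl
      have hr : 1 ≤ (hd P).1 := (hPcell _ hdmem).1
      rw [hdg] at hc1 hc2 hr hA
      have hk1 : k = 1 := by omega
      have hstep := List.isChain_iff_getElem.mp hQchain 0 (by omega)
      rcases hstep with ⟨hOB, _, _⟩ | ⟨_, heq⟩
      · rcases (Set.mem_union _ _ _).mp hOB with hO | hB
        · exact regionA_not_O hA hO
        · exact hB.2 (Or.inr hA)
      · subst hk1
        have e2 : (P[1]'hk).2 = (P[0]'hPlen).2 + 1 := by rw [heq]; rfl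
        omega
    have hcand : hd P ∈ candidates lam (addPath πt P) := by
      rcases (Set.mem_union _ _ _).mp hOA with hO | hA
      · left
        exact ⟨regionO_of_content (hPcell _ hdmem) hO hcontent, hwlt⟩
      · have hA' : hd P ∈ regionA lam := regionA_of_content (hPcell _ hdmem) hA hcontent
        right
        refine ⟨hA', hwlt, ?_⟩
        have hnnot := hnAnot hA'
        have hle := rpp_n_le hlam hπt _ (hPcell _ hdmem)
        simp only [addPath, if_neg hnnot, if_pos hdmem]
        omega
    have hsub : subPath (addPath πt P) P = πt := by
      funext v
      by_cases hv : v ∈ P <;> simp [subPath, addPath, hv]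
    refine ⟨hd P, hcand, P, ⟨hPne, hPcell, rfl, hQchain, hterm1, hterm2⟩,
      hlstP.symm, hlenP.symm, ?_, ?_⟩
    · rw [hsub]; exact hcompP
    · rw [hsub]; exact hπt
  · rintro ⟨u, hu, Q, ⟨hQne, hQcell, hQhd, hQchain, hQt1, hQt2⟩, hlstQ, hlenQ, hcompQ, hsubRPP⟩
    have hge : ∀ v ∈ Q, 1 ≤ π v := by
      intro v hv
      have hle := q_head_le hπ Q hQchain hQcell v hv
      rw [hQhd] at hle
      have hu1 : 1 ≤ π u := by
        rcases (Set.mem_union _ _ _).mp hu with hc | hc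
        · have := hc.2; omega
        · have := hc.2.1; omega
      omega
    have haddsub : addPath (subPath π Q) Q = π := by
      funext v
      by_cases hv : v ∈ Q
      · have := hge v hv
        simp only [addPath, subPath, if_pos hv]
        omega
      · simp only [addPath, subPath, if_neg hv]
    refine ⟨subPath π Q, hsubRPP, Q,
      ⟨⟨hQne, hQcell, ?_⟩, hcompQ, hlstQ.symm, hlenQ.symm, ?_⟩, haddsub⟩
    · exact hQchain.imp (fun a b hab => by
        rcases hab with ⟨_, _, hb⟩ | ⟨_, hb⟩
        · exact Or.inl hb
        · exact Or.inr hb)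
    · rw [haddsub]; exact hπ
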